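/- The dynamic Gain-Loss Ratio φ_t(V) := E[Σ_{i=t}^T V_i | F_t] / E[(Σ_{i=t}^T V_i)^− | F_t] when E[Σ_{i=t}^T V_i | F_t] > 0 (and 0 otherwise) is semi-weakly acceptance time consistent: φ_t(V) ≥ 1_{{V_t ≥ 0}}·EssInf_t(φ_{t+1}(V)) + 1_{{V_t < 0}}·(−∞) almost surely, for every adapted integrable process V and every t < T. -/

import Mathlib

open MeasureTheory

/-- The dynamic Gain-Loss Ratio of an adapted process `V` at time `t` (horizon `T`):
`φ_t(V) = E[Σ_{i=t}^T V_i | F_t] / E[(Σ_{i=t}^T V_i)⁻ | F_t]` when the conditional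
expectation of the sum is positive (with value `+∞` when the denominator vanishes),
and `0` otherwise. -/
noncomputable def dGLR {Ω : Type*} [F : MeasurableSpace Ω] (μ : Measure Ω)
    (𝓕 : ℕ → MeasurableSpace Ω) (T : ℕ) (V : ℕ → Ω → ℝ) (t : ℕ) : Ω → EReal :=
  fun ω =>
    let num := (μ[fun ω' => ∑ i ∈ Finset.Icc t T, V i ω'|𝓕 t]) ω
    let den := (μ[fun ω' => max (-(∑ i ∈ Finset.Icc t T, V i ω')) 0|𝓕 t]) ω
    if 0 < num then (if den = 0 then (⊤ : EReal) else ((num / den : ℝ) : EReal))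
    else 0

/-- The dynamic Gain-Loss Ratio is semi-weakly acceptance time consistent:
`φ_t(V) ≥ 1_{{V_t ≥ 0}}·EssInf_t(φ_{t+1}(V)) + 1_{{V_t < 0}}·(−∞)` a.s. -/
theorem dGLR_semiWeak_acceptance
    {Ω : Type*} {F : MeasurableSpace Ω} (𝓕 : ℕ → MeasurableSpace Ω)
    (h𝓕 : ∀ t, 𝓕 t ≤ F) (hmono𝓕 : ∀ t s, t ≤ s → 𝓕 t ≤ 𝓕 s)
    (μ : Measure Ω) [IsProbabilityMeasure μ] (T : ℕ)
    -- `EI t Y` is the `F_t`-conditional essential infimum of `Y` (largest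
    -- `F_t`-measurable a.s.-minorant)
    (EI : ℕ → (Ω → EReal) → Ω → EReal)
    (hEI : ∀ t (Y : Ω → EReal), Measurable[𝓕 t] (EI t Y) ∧ EI t Y ≤ᵐ[μ] Y ∧
      ∀ Z : Ω → EReal, Measurable[𝓕 t] Z → Z ≤ᵐ[μ] Y → Z ≤ᵐ[μ] EI t Y)
    (V : ℕ → Ω → ℝ)
    (hVadapted : ∀ i, Measurable[𝓕 i] (V i))
    (hVint : ∀ i, Integrable (V i) μ)
    (t : ℕ) (ht : t < T) :
    (fun ω => if 0 ≤ V t ω then EI t (dGLR μ 𝓕 T V (t + 1)) ω else (⊥ : EReal))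
      ≤ᵐ[μ] dGLR μ 𝓕 T V t := by
  classical
  obtain ⟨hEIm, hEIle, -⟩ := hEI t (dGLR μ 𝓕 T V (t + 1))
  set S : ℕ → Ω → ℝ := fun s ω => ∑ i ∈ Finset.Icc s T, V i ω with hS
  set Sm : ℕ → Ω → ℝ := fun s ω => max (-(S s ω)) 0 with hSm
  have hSint : ∀ s, Integrable (S s) μ := fun s =>
    integrable_finset_sum _ fun i _ => hVint i
  have hSmint : ∀ s, Integrable (Sm s) μ := fun s => (hSint s).neg_part
  set num : ℕ → Ω → ℝ := fun s => μ[S s|𝓕 s] with hnum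
  set den : ℕ → Ω → ℝ := fun s => μ[Sm s|𝓕 s] with hden
  have hφ : ∀ s, dGLR μ 𝓕 T V s = fun ω =>
      if 0 < num s ω then (if den s ω = 0 then (⊤ : EReal)
        else ((num s ω / den s ω : ℝ) : EReal)) else 0 := fun s => rfl
  have hnum_m : ∀ s, Measurable[𝓕 s] (num s) := fun s =>
    stronglyMeasurable_condExp.measurable
  have hden_m : ∀ s, Measurable[𝓕 s] (den s) := fun s =>
    stronglyMeasurable_condExp.measurable
  have hden0 : ∀ s, 0 ≤ᵐ[μ] den s := fun s =>
    condExp_nonneg (Filter.Eventually.of_forall fun ω => le_max_right _ _)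
  have hnumint : ∀ s, Integrable (num s) μ := fun s => integrable_condExp
  have hdenint : ∀ s, Integrable (den s) μ := fun s => integrable_condExp
  have hφm : Measurable[𝓕 t] (dGLR μ 𝓕 T V t) := by
    rw [hφ t]
    exact Measurable.ite (measurableSet_lt measurable_const (hnum_m t))
      (Measurable.ite ((hden_m t) (measurableSet_singleton 0)) measurable_const
        (measurable_coe_real_ereal.comp ((hnum_m t).div (hden_m t))))
      measurable_const
  set A : ℚ → Set Ω := fun q => {ω | 0 ≤ V t ω ∧
    (((q : ℝ) : EReal) < EI t (dGLR μ 𝓕 T V (t + 1)) ω ∧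
      dGLR μ 𝓕 T V t ω < ((q : ℝ) : EReal))} with hA
  have hAm : ∀ q, MeasurableSet[𝓕 t] (A q) := fun q =>
    ((hVadapted t) measurableSet_Ici).inter
      ((hEIm measurableSet_Ioi).inter (hφm measurableSet_Iio))
  have hsplit : ∀ ω, S t ω = V t ω + S (t + 1) ω := by
    intro ω
    have h1 : Finset.Icc t T = insert t (Finset.Icc (t + 1) T) := by
      rw [Finset.Icc_add_one_left_eq_Ioc, Finset.Ioc_insert_left ht.le]
    show ∑ i ∈ Finset.Icc t T, V i ω = _
    rw [h1, Finset.sum_insert (by simp)]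
  have hAnull : ∀ q : ℚ, 0 < q → μ (A q) = 0 := by
    intro q hq
    have hqR : (0 : ℝ) < (q : ℝ) := by exact_mod_cast hq
    by_contra hA0
    have hApos : 0 < μ (A q) := lt_of_le_of_ne zero_le (Ne.symm hA0)
    have hAF : MeasurableSet (A q) := h𝓕 t _ (hAm q)
    have hAF1 : MeasurableSet[𝓕 (t + 1)] (A q) :=
      hmono𝓕 t (t + 1) (Nat.le_succ t) _ (hAm q)
    -- a.e. pointwise positivity at time t+1 on A q
    have hptpos : ∀ᵐ ω ∂μ, ω ∈ A q →
        0 < num (t + 1) ω - q * den (t + 1) ω := by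
      filter_upwards [hEIle, hden0 (t + 1)] with ω hle hdw hmem
      have h1 : ((q : ℝ) : EReal) < dGLR μ 𝓕 T V (t + 1) ω :=
        lt_of_lt_of_le hmem.2.1 (hle)
      simp only [hφ (t + 1)] at h1
      by_cases hn : 0 < num (t + 1) ω
      · rw [if_pos hn] at h1
        by_cases hd : den (t + 1) ω = 0
        · rw [hd]; simpa using hn
        · rw [if_neg hd] at h1
          have h2 : (q : ℝ) < num (t + 1) ω / den (t + 1) ω :=
            EReal.coe_lt_coe_iff.1 h1
          have hdpos : 0 < den (t + 1) ω := lt_of_le_of_ne hdw (Ne.symm hd)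
          have h3 := (lt_div_iff₀ hdpos).1 h2
          linarith
      · rw [if_neg hn] at h1
        have : ((q : ℝ) : EReal) < ((0 : ℝ) : EReal) := by simpa using h1
        have := EReal.coe_lt_coe_iff.1 this
        linarith
    have hint1 : IntegrableOn (fun ω => num (t + 1) ω - q * den (t + 1) ω)
        (A q) μ :=
      ((hnumint (t + 1)).sub ((hdenint (t + 1)).const_mul _)).integrableOn
    have hpos : 0 < ∫ ω in A q, (num (t + 1) ω - q * den (t + 1) ω) ∂μ := by
      rw [setIntegral_pos_iff_support_of_nonneg_ae
        ((ae_restrict_iff' hAF).2 (hptpos.mono fun ω h hm => (h hm).le)) hint1]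
      refine lt_of_lt_of_le hApos (measure_mono_ae ?_)
      filter_upwards [hptpos] with ω h hmem
      exact ⟨Function.mem_support.2 (h hmem).ne', hmem⟩
    have heq1 : ∫ ω in A q, (num (t + 1) ω - q * den (t + 1) ω) ∂μ
        = ∫ ω in A q, (S (t + 1) ω - q * Sm (t + 1) ω) ∂μ := by
      rw [integral_sub ((hnumint (t + 1)).integrableOn)
          (((hdenint (t + 1)).const_mul _).integrableOn),
        integral_sub ((hSint (t + 1)).integrableOn)
          (((hSmint (t + 1)).const_mul _).integrableOn),
        integral_const_mul, integral_const_mul,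
        setIntegral_condExp (h𝓕 (t + 1)) (hSint (t + 1)) hAF1,
        setIntegral_condExp (h𝓕 (t + 1)) (hSmint (t + 1)) hAF1]
    have hmono : ∫ ω in A q, (S (t + 1) ω - q * Sm (t + 1) ω) ∂μ
        ≤ ∫ ω in A q, (S t ω - q * Sm t ω) ∂μ := by
      refine setIntegral_mono_on
        (((hSint (t + 1)).sub ((hSmint (t + 1)).const_mul _)).integrableOn)
        (((hSint t).sub ((hSmint t).const_mul _)).integrableOn)
        hAF fun ω hω => ?_
      have hV0 : 0 ≤ V t ω := hω.1
      have h1 : S (t + 1) ω ≤ S t ω := by rw [hsplit ω]; linarith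
      have h2 : Sm t ω ≤ Sm (t + 1) ω :=
        max_le_max (by linarith) le_rfl
      nlinarith
    have heq2 : ∫ ω in A q, (S t ω - q * Sm t ω) ∂μ
        = ∫ ω in A q, (num t ω - q * den t ω) ∂μ := by
      rw [integral_sub ((hnumint t).integrableOn)
          (((hdenint t).const_mul _).integrableOn),
        integral_sub ((hSint t).integrableOn)
          (((hSmint t).const_mul _).integrableOn),
        integral_const_mul, integral_const_mul,
        setIntegral_condExp (h𝓕 t) (hSint t) (hAm q),
        setIntegral_condExp (h𝓕 t) (hSmint t) (hAm q)]
    have hnonpos : ∫ ω in A q, (num t ω - q * den t ω) ∂μ ≤ 0 := by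
      apply integral_nonpos_of_ae
      rw [Filter.EventuallyLE, ae_restrict_iff' hAF]
      filter_upwards [hden0 t] with ω hdw hmem
      have hφlt := hmem.2.2
      simp only [hφ t] at hφlt
      by_cases hn : 0 < num t ω
      · rw [if_pos hn] at hφlt
        by_cases hd : den t ω = 0
        · rw [if_pos hd] at hφlt
          exact absurd hφlt (not_top_lt)
        · rw [if_neg hd] at hφlt
          have h2 : num t ω / den t ω < (q : ℝ) := EReal.coe_lt_coe_iff.1 hφlt
          have hdpos : 0 < den t ω := lt_of_le_of_ne hdw (Ne.symm hd)
          have h3 := (div_lt_iff₀ hdpos).1 h2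
          simp only [Pi.zero_apply]
          linarith
      · push_neg at hn
        have h2 : 0 ≤ q * den t ω := mul_nonneg hqR.le hdw
        simp only [Pi.zero_apply]
        linarith
    linarith
  have hUnull : μ (⋃ q : {q : ℚ // 0 < q}, A q.1) = 0 :=
    measure_iUnion_null fun q => hAnull q.1 q.2
  have hUae : ∀ᵐ ω ∂μ, ω ∉ ⋃ q : {q : ℚ // 0 < q}, A q.1 :=
    measure_eq_zero_iff_ae_notMem.1 hUnull
  filter_upwards [hUae, hden0 t] with ω hω hdw
  by_cases hV : 0 ≤ V t ω
  · rw [if_pos hV]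
    by_contra hcon
    push_neg at hcon
    obtain ⟨q, h1, h2⟩ := EReal.exists_rat_btwn_of_lt hcon
    have hφ0 : (0 : EReal) ≤ dGLR μ 𝓕 T V t ω := by
      simp only [hφ t]
      split_ifs with hn hd
      · exact le_top
      · exact_mod_cast div_nonneg hn.le hdw
      · exact le_refl 0
    have hq0 : 0 < q := by
      have h3 : ((0 : ℝ) : EReal) < ((q : ℝ) : EReal) :=
        lt_of_le_of_lt (by simpa using hφ0) h1
      exact_mod_cast EReal.coe_lt_coe_iff.1 h3
    exact hω (Set.mem_iUnion.2 ⟨⟨q, hq0⟩, hV, h2, h1⟩)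
  · rw [if_neg hV]
    exact bot_le
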